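/- Let C_t : 𝒳 → ℝ for t = 1, …, T be a sequence of functions on a set 𝒳, partition {1,…,T} into consecutive batches 𝒯_1, …, 𝒯_s each of length at most Δ_T, let x_j* minimize Σ_{t ∈ 𝒯_j} C_t over 𝒳 and x_t* minimize C_t over 𝒳. If V_j = Σ_{t ∈ 𝒯_j, t ≥ 2} sup_{x ∈ 𝒳} |C_t(x) - C_{t-1}(x)|, then Σ_{t ∈ 𝒯_j} (C_t(x_j*) - C_t(x_t*)) ≤ 2 Δ_T V_j. -/

import Mathlib

theorem batch_comparator_variation {X : Type*} [Nonempty X] (C : ℕ → X → ℝ)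
    (t₁ t₂ ΔT : ℕ) (h1 : 1 ≤ t₁) (h12 : t₁ ≤ t₂)
    (hcard : (Finset.Icc t₁ t₂).card ≤ ΔT)
    (hbdd : ∀ t, BddAbove (Set.range fun x => |C t x - C (t - 1) x|))
    (xj : X)
    (hxj : ∀ y, ∑ t ∈ Finset.Icc t₁ t₂, C t xj ≤ ∑ t ∈ Finset.Icc t₁ t₂, C t y)
    (xstar : ℕ → X) (hxstar : ∀ t y, C t (xstar t) ≤ C t y) :
    ∑ t ∈ Finset.Icc t₁ t₂, (C t xj - C t (xstar t)) ≤
      2 * ΔT * ∑ t ∈ (Finset.Icc t₁ t₂).filter (fun t => 2 ≤ t),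
        ⨆ x, |C t x - C (t - 1) x| := by
  set F := (Finset.Icc t₁ t₂).filter (fun t => 2 ≤ t) with hF
  set V := ∑ t ∈ F, ⨆ x, |C t x - C (t - 1) x| with hV
  have hsupnn : ∀ t, 0 ≤ ⨆ x, |C t x - C (t - 1) x| := by
    intro t
    exact le_trans (abs_nonneg _) (le_ciSup (hbdd t) (Classical.arbitrary X))
  have hVnn : 0 ≤ V := Finset.sum_nonneg fun t _ => hsupnn t
  -- telescoping bound
  have habs : ∀ (x : X) (a b : ℕ), t₁ ≤ a → a ≤ b → b ≤ t₂ →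
      |C b x - C a x| ≤ V := by
    intro x a b ha hab hb
    have key : ∀ b, a ≤ b → |C b x - C a x| ≤
        ∑ s ∈ Finset.Ioc a b, ⨆ y, |C s y - C (s - 1) y| := by
      intro b hab
      induction b, hab using Nat.le_induction with
      | base => simp
      | succ b hb ih =>
        have h1' : |C (b + 1) x - C a x| ≤ |C (b + 1) x - C b x| + |C b x - C a x| := by
          have := abs_sub_abs_le_abs_sub (C (b+1) x - C a x) (C b x - C a x)
          calc |C (b + 1) x - C a x| = |(C (b+1) x - C b x) + (C b x - C a x)| := by ring_nf
            _ ≤ _ := abs_add_le _ _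
        have h2' : |C (b + 1) x - C b x| ≤ ⨆ y, |C (b+1) y - C (b+1-1) y| := by
          have := le_ciSup (hbdd (b+1)) x
          simpa using this
        rw [Finset.sum_Ioc_succ_top hb]
        simp only [Nat.add_sub_cancel] at h2' ⊢
        linarith
    have hsub : Finset.Ioc a b ⊆ F := by
      intro s hs
      rw [Finset.mem_Ioc] at hs
      rw [hF, Finset.mem_filter, Finset.mem_Icc]
      omega
    calc |C b x - C a x| ≤ ∑ s ∈ Finset.Ioc a b, ⨆ y, |C s y - C (s - 1) y| := key b hab
      _ ≤ V := Finset.sum_le_sum_of_subset_of_nonneg hsub fun t _ _ => hsupnn t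
  have hpair : ∀ (x : X) (a : ℕ), a ∈ Finset.Icc t₁ t₂ → ∀ b ∈ Finset.Icc t₁ t₂,
      |C a x - C b x| ≤ V := by
    intro x a ha b hb
    rw [Finset.mem_Icc] at ha hb
    rcases le_total b a with h | h
    · exact habs x b a hb.1 h ha.2
    · rw [abs_sub_comm]; exact habs x a b ha.1 h hb.2
  set n := (Finset.Icc t₁ t₂).card with hn
  have hnpos : 0 < n := Finset.card_pos.mpr (Finset.nonempty_Icc.mpr h12)
  -- pointwise bound
  have hpt : ∀ t ∈ Finset.Icc t₁ t₂, C t xj - C t (xstar t) ≤ 2 * V := by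
    intro t ht
    have hsum1 : (n : ℝ) * (C t xj - V) ≤ ∑ s ∈ Finset.Icc t₁ t₂, C s xj := by
      have : ∑ _s ∈ Finset.Icc t₁ t₂, (C t xj - V) ≤ ∑ s ∈ Finset.Icc t₁ t₂, C s xj := by
        apply Finset.sum_le_sum
        intro s hs
        have := hpair xj t ht s hs
        have h' : C t xj - C s xj ≤ V := le_trans (le_abs_self _) this
        linarith
      rw [Finset.sum_const, nsmul_eq_mul] at this
      exact this
    have hsum2 : ∑ s ∈ Finset.Icc t₁ t₂, C s (xstar t) ≤ (n : ℝ) * (C t (xstar t) + V) := by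
      have : ∑ s ∈ Finset.Icc t₁ t₂, C s (xstar t) ≤
          ∑ _s ∈ Finset.Icc t₁ t₂, (C t (xstar t) + V) := by
        apply Finset.sum_le_sum
        intro s hs
        have := hpair (xstar t) s hs t ht
        have h' : C s (xstar t) - C t (xstar t) ≤ V := le_trans (le_abs_self _) this
        linarith
      rw [Finset.sum_const, nsmul_eq_mul] at this
      exact this
    have hchain : (n : ℝ) * (C t xj - V) ≤ (n : ℝ) * (C t (xstar t) + V) :=
      le_trans hsum1 (le_trans (hxj (xstar t)) hsum2)
    have hnpos' : (0 : ℝ) < n := by exact_mod_cast hnpos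
    have := le_of_mul_le_mul_left (by linarith [hchain] : (n:ℝ) * (C t xj - V) ≤ (n:ℝ) * (C t (xstar t) + V)) hnpos'
    linarith
  -- sum up
  calc ∑ t ∈ Finset.Icc t₁ t₂, (C t xj - C t (xstar t))
      ≤ ∑ _t ∈ Finset.Icc t₁ t₂, 2 * V := Finset.sum_le_sum hpt
    _ = (n : ℝ) * (2 * V) := by rw [Finset.sum_const, nsmul_eq_mul]
    _ ≤ (ΔT : ℝ) * (2 * V) := by
        apply mul_le_mul_of_nonneg_right _ (by linarith)
        exact_mod_cast hcard
    _ = 2 * ΔT * V := by ring
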